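/- Let m ≥ 1, let M, N ⊆ [m] with M ⊊ [m] and M ⊄ N, and let D = aΔ_M^c + cΔ_N ⊆ E^m. Then the binary Gray image Φ(C^R_D) is an F₂-linear code of length (2^m−2^{|M|})·2^{|N|+1}, with 2^m codewords (F₂-dimension m), with minimum distance (2^m−2^{|M|})·2^{|N|−1}, and every nonzero codeword has Hamming weight in {(2^m−2^{|M|})·2^{|N|}, 2^{m+|N|−1}, (2^m−2^{|M|})·2^{|N|−1}}. Moreover, if |M|+|N| ≥ 3, then Φ(C^R_D) is self-orthogonal. -/

import Mathlib

open Finset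

/-- The simplicial complex `Δ_M ⊆ 𝔽₂^m` generated by `M ⊆ [m]`:
all vectors whose support is contained in `M`. -/
def deltaC {m : ℕ} (M : Finset (Fin m)) : Finset (Fin m → ZMod 2) :=
  Finset.univ.filter (fun w => ∀ i, w i ≠ 0 → i ∈ M)

/-- Dot product over `𝔽₂`. -/
def dotp {m : ℕ} (x y : Fin m → ZMod 2) : ZMod 2 := ∑ i, x i * y i

/-- The Gray map on a single element `a·s + c·t ↔ (s, t)` of `E = 𝔽₂ × 𝔽₂`:
`Φ(as + ct) = (t, s + t)`. -/
def grayPair (e : ZMod 2 × ZMod 2) : Fin 2 → ZMod 2 := ![e.2, e.1 + e.2]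

/-- The left codeword `c^L_D(v)` for `v = aα + cβ ↔ (α, β)`:
its coordinate at `d = (t₁, t₂) ∈ D` is `a(α·t₁) + c(β·t₁) ↔ (α·t₁, β·t₁)`. -/
def cwL {m : ℕ} (Ds : Finset ((Fin m → ZMod 2) × (Fin m → ZMod 2)))
    (v : (Fin m → ZMod 2) × (Fin m → ZMod 2)) :
    {d // d ∈ Ds} → ZMod 2 × ZMod 2 :=
  fun d => (dotp v.1 d.1.1, dotp v.2 d.1.1)

/-- The Gray image `Φ(c^L_D(v)) ∈ 𝔽₂^{2|D|}` of the left codeword `c^L_D(v)`;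
its Hamming weight (`hammingNorm`) is the Lee weight of `c^L_D(v)`. -/
def gcwL {m : ℕ} (Ds : Finset ((Fin m → ZMod 2) × (Fin m → ZMod 2)))
    (v : (Fin m → ZMod 2) × (Fin m → ZMod 2)) :
    {d // d ∈ Ds} × Fin 2 → ZMod 2 :=
  fun x => grayPair (cwL Ds v x.1) x.2

/-- The right codeword `c^R_D(v)` for `v = aα + cβ ↔ (α, β)`:
its coordinate at `d = (t₁, t₂) ∈ D` is `a(t₁·α) + c(t₂·α) ↔ (t₁·α, t₂·α)`. -/
def cwR {m : ℕ} (Ds : Finset ((Fin m → ZMod 2) × (Fin m → ZMod 2)))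
    (v : (Fin m → ZMod 2) × (Fin m → ZMod 2)) :
    {d // d ∈ Ds} → ZMod 2 × ZMod 2 :=
  fun d => (dotp d.1.1 v.1, dotp d.1.2 v.1)

/-- The Gray image `Φ(c^R_D(v)) ∈ 𝔽₂^{2|D|}` of the right codeword `c^R_D(v)`;
its Hamming weight (`hammingNorm`) is the Lee weight of `c^R_D(v)`. -/
def gcwR {m : ℕ} (Ds : Finset ((Fin m → ZMod 2) × (Fin m → ZMod 2)))
    (v : (Fin m → ZMod 2) × (Fin m → ZMod 2)) :
    {d // d ∈ Ds} × Fin 2 → ZMod 2 :=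
  fun x => grayPair (cwR Ds v x.1) x.2


lemma z2 : ∀ x : ZMod 2, x = 0 ∨ x = 1 := by decide

lemma z2add : ∀ x : ZMod 2, x + x = 0 := by decide

lemma z2aab : ∀ a b : ZMod 2, a + b + b = a := by decide

lemma z2addone : ∀ x : ZMod 2, x + 1 ≠ x := by decide

lemma gray_add : ∀ (e f : ZMod 2 × ZMod 2) (j : Fin 2),
    grayPair (e + f) j = grayPair e j + grayPair f j := by decide

lemma gray_mul : ∀ (e f : ZMod 2 × ZMod 2),
    grayPair e 0 * grayPair f 0 + grayPair e 1 * grayPair f 1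
      = e.1 * f.1 + (e.1 * f.2 + e.2 * f.1) := by decide

lemma mem_deltaC {m : ℕ} {S : Finset (Fin m)} {w : Fin m → ZMod 2} :
    w ∈ deltaC S ↔ ∀ i, w i ≠ 0 → i ∈ S := by simp [deltaC]

lemma deltaC_univ {m : ℕ} : deltaC (Finset.univ : Finset (Fin m)) = Finset.univ := by
  ext w; simp [mem_deltaC]

lemma card_deltaC {m : ℕ} (S : Finset (Fin m)) : (deltaC S).card = 2 ^ S.card := by
  have h : deltaC S = Fintype.piFinset
      (fun i => if i ∈ S then (Finset.univ : Finset (ZMod 2)) else {0}) := by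
    ext w
    simp only [mem_deltaC, Fintype.mem_piFinset]
    constructor
    · intro h i
      by_cases hi : i ∈ S
      · simp [hi]
      · simp only [hi, if_neg, if_false, Finset.mem_singleton]
        by_contra hw
        exact hi (h i hw)
    · intro h i hw
      by_contra hi
      have := h i
      simp [hi] at this
      exact hw this
  rw [h, Fintype.card_piFinset]
  have : ∀ i : Fin m, (if i ∈ S then (Finset.univ : Finset (ZMod 2)) else {0}).card
      = if i ∈ S then 2 else 1 := by
    intro i; by_cases hi : i ∈ S <;> simp [hi]
  simp_rw [this]
  rw [Finset.prod_ite_mem, Finset.univ_inter, Finset.prod_const]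

lemma add_single_mem_deltaC {m : ℕ} {S : Finset (Fin m)} {t : Fin m → ZMod 2} {i : Fin m}
    (ht : t ∈ deltaC S) (hi : i ∈ S) : t + Pi.single i 1 ∈ deltaC S := by
  rw [mem_deltaC] at ht ⊢
  intro j hj
  by_cases hji : j = i
  · exact hji ▸ hi
  · apply ht j
    simpa [Pi.single_eq_of_ne hji] using hj

lemma dotp_add_right {m : ℕ} (t x y : Fin m → ZMod 2) :
    dotp t (x + y) = dotp t x + dotp t y := by
  simp [dotp, mul_add, Finset.sum_add_distrib]

lemma dotp_add_left {m : ℕ} (x y t : Fin m → ZMod 2) :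
    dotp (x + y) t = dotp x t + dotp y t := by
  simp [dotp, add_mul, Finset.sum_add_distrib]

lemma dotp_zero_right {m : ℕ} (t : Fin m → ZMod 2) : dotp t 0 = 0 := by simp [dotp]

lemma dotp_single_left {m : ℕ} (i : Fin m) (x : Fin m → ZMod 2) :
    dotp (Pi.single i 1) x = x i := by
  simp [dotp, Pi.single_apply, ite_mul]

lemma dotp_eq_zero_of_disjoint {m : ℕ} {S : Finset (Fin m)} {α t : Fin m → ZMod 2}
    (ht : t ∈ deltaC S) (h : ∀ i ∈ S, α i = 0) : dotp t α = 0 := by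
  rw [mem_deltaC] at ht
  apply Finset.sum_eq_zero
  intro i _
  by_cases hti : t i = 0
  · simp [hti]
  · rw [h i (ht i hti), mul_zero]

lemma card_filter_dotp_ne {m : ℕ} (S : Finset (Fin m)) (α : Fin m → ZMod 2)
    (i : Fin m) (hi : i ∈ S) (hαi : α i ≠ 0) :
    ((deltaC S).filter (fun t => dotp t α ≠ 0)).card = 2 ^ (S.card - 1) := by
  have hα1 : α i = 1 := (z2 (α i)).resolve_left hαi
  have hflip : ∀ t : Fin m → ZMod 2, dotp (t + Pi.single i 1) α = dotp t α + 1 := by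
    intro t; rw [dotp_add_left, dotp_single_left, hα1]
  have hcan : ∀ t : Fin m → ZMod 2, t + Pi.single i 1 + Pi.single i 1 = t := by
    intro t; funext j; simp [z2aab]
  have hbij : ((deltaC S).filter (fun t => dotp t α = 0)).card
      = ((deltaC S).filter (fun t => dotp t α ≠ 0)).card := by
    refine Finset.card_bij' (fun t _ => t + Pi.single i 1) (fun t _ => t + Pi.single i 1)
      ?_ ?_ (fun t _ => hcan t) (fun t _ => hcan t)
    · intro t ht
      simp only [Finset.mem_filter] at ht ⊢
      refine ⟨add_single_mem_deltaC ht.1 hi, ?_⟩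
      rw [hflip, ht.2]; simp
    · intro t ht
      simp only [Finset.mem_filter] at ht ⊢
      refine ⟨add_single_mem_deltaC ht.1 hi, ?_⟩
      have := (z2 (dotp t α)).resolve_left ht.2
      rw [hflip, this]; simp [z2add]
  have hsplit : ((deltaC S).filter (fun t => dotp t α ≠ 0)).card
      + ((deltaC S).filter (fun t => dotp t α = 0)).card = 2 ^ S.card := by
    rw [← card_deltaC S]
    have := Finset.card_filter_add_card_filter_not
      (s := deltaC S) (p := fun t => dotp t α ≠ 0)
    simpa using this
  have hScard : 1 ≤ S.card := Finset.card_pos.mpr ⟨i, hi⟩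
  have h2 : 2 ^ S.card = 2 * 2 ^ (S.card - 1) := by
    rw [← pow_succ']
    congr 1
    omega
  omega

lemma card_filter_dotp_zero {m : ℕ} (S : Finset (Fin m)) (α : Fin m → ZMod 2)
    (h : ∀ i ∈ S, α i = 0) :
    ((deltaC S).filter (fun t => dotp t α ≠ 0)).card = 0 := by
  rw [Finset.card_eq_zero, Finset.filter_eq_empty_iff]
  intro t ht
  simp [dotp_eq_zero_of_disjoint ht h]

lemma sum_flip {m : ℕ} {S : Finset (Fin m)} {j : Fin m} (hj : j ∈ S)
    (f : (Fin m → ZMod 2) → ZMod 2)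
    (hf : ∀ t, f (t + Pi.single j 1) = f t) :
    ∑ t ∈ deltaC S, f t = 0 := by
  refine Finset.sum_involution (fun t _ => t + Pi.single j 1)
    (fun t _ => by rw [hf, z2add])
    (fun t _ _ h => ?_)
    (fun t ht => add_single_mem_deltaC ht hj)
    (fun t _ => by funext k; simp [z2aab])
  have := congrFun h j
  simp only [Pi.add_apply, Pi.single_eq_same] at this
  exact z2addone (t j) this

lemma sum_coord {m : ℕ} {S : Finset (Fin m)} (hS : 2 ≤ S.card) (i : Fin m) :
    ∑ t ∈ deltaC S, t i = 0 := by
  by_cases hi : i ∈ S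
  · obtain ⟨j, hj⟩ : (S.erase i).Nonempty := by
      rw [← Finset.card_pos, Finset.card_erase_of_mem hi]; omega
    have hji : j ≠ i := Finset.ne_of_mem_erase hj
    exact sum_flip (Finset.mem_of_mem_erase hj) (fun t => t i)
      (fun t => by simp [Pi.single_eq_of_ne (Ne.symm hji)])
  · apply Finset.sum_eq_zero
    intro t ht
    by_contra h
    exact hi (mem_deltaC.mp ht i h)

lemma sum_coord2 {m : ℕ} {S : Finset (Fin m)} (hS : 3 ≤ S.card) (p q : Fin m) :
    ∑ t ∈ deltaC S, t p * t q = 0 := by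
  by_cases hp : p ∈ S
  · by_cases hq : q ∈ S
    · obtain ⟨j, hj⟩ : ((S.erase p).erase q).Nonempty := by
        rw [← Finset.card_pos]
        have h1 := Finset.card_erase_of_mem hp
        have h2 : ((S.erase p).erase q).card ≥ (S.erase p).card - 1 :=
          Finset.pred_card_le_card_erase
        omega
      have hjq : j ≠ q := Finset.ne_of_mem_erase hj
      have hjp : j ≠ p := Finset.ne_of_mem_erase (Finset.mem_of_mem_erase hj)
      exact sum_flip (Finset.mem_of_mem_erase (Finset.mem_of_mem_erase hj))
        (fun t => t p * t q)
        (fun t => by simp [Pi.single_eq_of_ne (Ne.symm hjp), Pi.single_eq_of_ne (Ne.symm hjq)])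
    · apply Finset.sum_eq_zero
      intro t ht
      have : t q = 0 := by
        by_contra h; exact hq (mem_deltaC.mp ht q h)
      simp [this]
  · apply Finset.sum_eq_zero
    intro t ht
    have : t p = 0 := by
      by_contra h; exact hp (mem_deltaC.mp ht p h)
    simp [this]

lemma sum_dotp_zero {m : ℕ} {S : Finset (Fin m)} (hS : 2 ≤ S.card) (α : Fin m → ZMod 2) :
    ∑ t ∈ deltaC S, dotp t α = 0 := by
  simp only [dotp]
  rw [Finset.sum_comm]
  apply Finset.sum_eq_zero
  intro i _
  rw [← Finset.sum_mul, sum_coord hS i, zero_mul]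

lemma sum_dotp_mul_zero {m : ℕ} {S : Finset (Fin m)} (hS : 3 ≤ S.card)
    (α α' : Fin m → ZMod 2) :
    ∑ t ∈ deltaC S, dotp t α * dotp t α' = 0 := by
  have expand : ∀ t : Fin m → ZMod 2,
      dotp t α * dotp t α' = ∑ p, ∑ q, (t p * t q) * (α p * α' q) := by
    intro t
    rw [dotp, dotp, Finset.sum_mul_sum]
    apply Finset.sum_congr rfl; intro p _
    apply Finset.sum_congr rfl; intro q _
    ring
  simp_rw [expand]
  rw [Finset.sum_comm]
  apply Finset.sum_eq_zero
  intro p _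
  rw [Finset.sum_comm]
  apply Finset.sum_eq_zero
  intro q _
  rw [← Finset.sum_mul, sum_coord2 hS p q, zero_mul]

lemma sum_compl_eq {m : ℕ} (S : Finset (Fin m)) (f : (Fin m → ZMod 2) → ZMod 2) :
    ∑ t ∈ (deltaC S)ᶜ, f t = (∑ t, f t) + ∑ t ∈ deltaC S, f t := by
  have h := Finset.sum_add_sum_compl (deltaC S) f
  have : ∀ x y z : ZMod 2, x + y = z → y = z + x := by decide
  exact this _ _ _ h

lemma card_filter_compl {m : ℕ} (S : Finset (Fin m)) (p : (Fin m → ZMod 2) → Prop)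
    [DecidablePred p] :
    ((deltaC S)ᶜ.filter p).card = (Finset.univ.filter p).card - ((deltaC S).filter p).card := by
  have h : ((deltaC S).filter p).card + ((deltaC S)ᶜ.filter p).card
      = (Finset.univ.filter p).card := by
    rw [← Finset.card_union_of_disjoint]
    · congr 1
      rw [← Finset.filter_union, Finset.union_compl]
    · exact Finset.disjoint_filter_filter disjoint_compl_right
  omega

lemma weight_formula {m : ℕ} (A B : Finset (Fin m → ZMod 2))
    (v : (Fin m → ZMod 2) × (Fin m → ZMod 2)) :
    hammingNorm (gcwR (A ×ˢ B) v) =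
      A.card * (B.filter (fun t => dotp t v.1 ≠ 0)).card
      + ((A.card - (A.filter (fun t => dotp t v.1 ≠ 0)).card)
          * (B.filter (fun t => dotp t v.1 ≠ 0)).card
        + (A.filter (fun t => dotp t v.1 ≠ 0)).card
          * (B.card - (B.filter (fun t => dotp t v.1 ≠ 0)).card)) := by
  classical
  set α := v.1 with hα
  set g := (B.filter (fun t => dotp t α ≠ 0)).card with hg
  set fA := (A.filter (fun t => dotp t α ≠ 0)).card with hfA
  have hnorm : hammingNorm (gcwR (A ×ˢ B) v)
      = ∑ x : {d // d ∈ A ×ˢ B} × Fin 2, (if gcwR (A ×ˢ B) v x ≠ 0 then 1 else 0) := by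
    rw [hammingNorm, Finset.card_filter]
  rw [hnorm, Fintype.sum_prod_type]
  have hstep : ∀ d : {d // d ∈ A ×ˢ B},
      ∑ j : Fin 2, (if gcwR (A ×ˢ B) v (d, j) ≠ 0 then 1 else 0)
      = ((if dotp d.1.2 α ≠ 0 then 1 else 0)
          + if dotp d.1.1 α + dotp d.1.2 α ≠ 0 then 1 else 0 : ℕ) := by
    intro d
    rw [Fin.sum_univ_two]
    simp [gcwR, cwR, grayPair, ← hα, ite_not]
  simp_rw [hstep]
  rw [Finset.sum_coe_sort (A ×ˢ B)
    (fun d => ((if dotp d.2 α ≠ 0 then 1 else 0)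
      + if dotp d.1 α + dotp d.2 α ≠ 0 then 1 else 0 : ℕ))]
  rw [Finset.sum_product]
  have hinner : ∀ t₁ ∈ A,
      ∑ t₂ ∈ B, ((if dotp t₂ α ≠ 0 then 1 else 0)
        + if dotp t₁ α + dotp t₂ α ≠ 0 then 1 else 0 : ℕ)
      = g + (if dotp t₁ α = 0 then g else B.card - g) := by
    intro t₁ _
    rw [Finset.sum_add_distrib]
    congr 1
    · rw [hg, Finset.card_filter]
    · by_cases h1 : dotp t₁ α = 0
      · rw [if_pos h1]
        simp only [h1, zero_add]
        rw [hg, Finset.card_filter]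
      · have h1' : dotp t₁ α = 1 := (z2 _).resolve_left h1
        rw [if_neg h1]
        have : ∀ t₂, ((if dotp t₁ α + dotp t₂ α ≠ 0 then 1 else 0 : ℕ))
            = if dotp t₂ α = 0 then 1 else 0 := by
          intro t₂
          rw [h1']
          rcases z2 (dotp t₂ α) with h | h <;> simp [h] <;> decide
        simp_rw [this]
        rw [← Finset.card_filter]
        have := Finset.card_filter_add_card_filter_not
          (s := B) (p := fun t => dotp t α ≠ 0)
        simp only [not_not] at this
        omega
  rw [Finset.sum_congr rfl hinner, Finset.sum_add_distrib, Finset.sum_const, smul_eq_mul]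
  congr 1
  rw [Finset.sum_ite, Finset.sum_const, Finset.sum_const, smul_eq_mul, smul_eq_mul]
  have hc0 : (A.filter (fun t => dotp t α = 0)).card = A.card - fA := by
    have := Finset.card_filter_add_card_filter_not
      (s := A) (p := fun t => dotp t α ≠ 0)
    simp only [not_not] at this
    omega
  have hfilter_ne : (A.filter (fun t => ¬ dotp t α = 0)) = A.filter (fun t => dotp t α ≠ 0) := rfl
  rw [hfilter_ne, hc0]

lemma card_compl_deltaC {m : ℕ} (S : Finset (Fin m)) :
    ((deltaC S)ᶜ).card = 2 ^ m - 2 ^ S.card := by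
  rw [Finset.card_compl, card_deltaC]
  congr 1
  simp

lemma card_filter_univ_dotp {m : ℕ} {α : Fin m → ZMod 2} (hα : α ≠ 0) :
    ((Finset.univ : Finset (Fin m → ZMod 2)).filter (fun t => dotp t α ≠ 0)).card
      = 2 ^ (m - 1) := by
  obtain ⟨i, hi⟩ := Function.ne_iff.mp hα
  have := card_filter_dotp_ne Finset.univ α i (Finset.mem_univ i) (by simpa using hi)
  rw [deltaC_univ] at this
  simpa using this

lemma weight_W1 {m : ℕ} (M N : Finset (Fin m))
    (v : (Fin m → ZMod 2) × (Fin m → ZMod 2))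
    (i : Fin m) (hi : i ∈ N) (hαi : v.1 i ≠ 0) :
    hammingNorm (gcwR ((deltaC M)ᶜ ×ˢ deltaC N) v) = (2 ^ m - 2 ^ M.card) * 2 ^ N.card := by
  rw [weight_formula]
  rw [card_filter_dotp_ne N v.1 i hi hαi, card_compl_deltaC, card_deltaC]
  set g := 2 ^ (N.card - 1)
  set A := 2 ^ m - 2 ^ M.card
  set fA := (((deltaC M)ᶜ).filter (fun t => dotp t v.1 ≠ 0)).card with hfA
  have hfle : fA ≤ A := by
    rw [hfA]
    calc #(Finset.filter (fun t => dotp t v.1 ≠ 0) (deltaC M)ᶜ) ≤ ((deltaC M)ᶜ).card :=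
          Finset.card_filter_le _ _
      _ = A := card_compl_deltaC M
  have hn : 1 ≤ N.card := Finset.card_pos.mpr ⟨i, hi⟩
  have h2n : 2 ^ N.card = 2 * g := by
    rw [← pow_succ']; congr 1; omega
  have h1 : A - fA ≤ A := Nat.sub_le _ _
  rw [h2n]
  have : A * g + ((A - fA) * g + fA * (2 * g - g)) = A * g + ((A - fA) + fA) * g := by
    have : 2 * g - g = g := by omega
    rw [this, Nat.add_mul]
  rw [this, Nat.sub_add_cancel hfle]
  ring

lemma weight_W23 {m : ℕ} (hm : 1 ≤ m) (M N : Finset (Fin m))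
    (v : (Fin m → ZMod 2) × (Fin m → ZMod 2)) (hv : v.1 ≠ 0)
    (hN : ∀ i ∈ N, v.1 i = 0) :
    hammingNorm (gcwR ((deltaC M)ᶜ ×ˢ deltaC N) v)
      = (2 ^ (m - 1) - ((deltaC M).filter (fun t => dotp t v.1 ≠ 0)).card) * 2 ^ N.card := by
  rw [weight_formula]
  rw [card_filter_dotp_zero N v.1 hN, card_deltaC]
  rw [card_filter_compl, card_filter_univ_dotp hv]
  simp

lemma weight_W2 {m : ℕ} (hm : 1 ≤ m) (M N : Finset (Fin m))
    (v : (Fin m → ZMod 2) × (Fin m → ZMod 2)) (hv : v.1 ≠ 0)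
    (hN : ∀ i ∈ N, v.1 i = 0) (i : Fin m) (hi : i ∈ M) (hαi : v.1 i ≠ 0) :
    hammingNorm (gcwR ((deltaC M)ᶜ ×ˢ deltaC N) v)
      = 2 ^ (m + N.card - 1) - 2 ^ (M.card + N.card - 1) := by
  rw [weight_W23 hm M N v hv hN, card_filter_dotp_ne M v.1 i hi hαi]
  have ha : 1 ≤ M.card := Finset.card_pos.mpr ⟨i, hi⟩
  rw [Nat.sub_mul, ← pow_add, ← pow_add]
  congr 2 <;> omega

lemma weight_W3 {m : ℕ} (hm : 1 ≤ m) (M N : Finset (Fin m))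
    (v : (Fin m → ZMod 2) × (Fin m → ZMod 2)) (hv : v.1 ≠ 0)
    (hN : ∀ i ∈ N, v.1 i = 0) (hM : ∀ i ∈ M, v.1 i = 0) :
    hammingNorm (gcwR ((deltaC M)ᶜ ×ˢ deltaC N) v) = 2 ^ (m + N.card - 1) := by
  rw [weight_W23 hm M N v hv hN, card_filter_dotp_zero M v.1 hM]
  rw [Nat.sub_zero, ← pow_add]
  congr 1; omega

lemma natCast_two_pow_zmod2 {n : ℕ} (hn : 1 ≤ n) : ((2 ^ n : ℕ) : ZMod 2) = 0 := by
  rw [Nat.cast_pow]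
  have : ((2 : ℕ) : ZMod 2) = 0 := by decide
  rw [this, zero_pow (by omega)]

lemma sum_dotp_compl_zero {m : ℕ} {M : Finset (Fin m)} (hM : 2 ≤ M.card) (hm : 2 ≤ m)
    (x : Fin m → ZMod 2) :
    ∑ t ∈ (deltaC M)ᶜ, dotp t x = 0 := by
  rw [sum_compl_eq, sum_dotp_zero hM x]
  have : ∑ t : Fin m → ZMod 2, dotp t x = ∑ t ∈ deltaC (Finset.univ : Finset (Fin m)), dotp t x := by
    rw [deltaC_univ]
  rw [this, sum_dotp_zero (by simpa using hm) x, add_zero]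

lemma sum_dotp_mul_compl_zero {m : ℕ} {M : Finset (Fin m)} (hM : 3 ≤ M.card) (hm : 3 ≤ m)
    (x y : Fin m → ZMod 2) :
    ∑ t ∈ (deltaC M)ᶜ, dotp t x * dotp t y = 0 := by
  rw [sum_compl_eq, sum_dotp_mul_zero hM x y]
  have : ∑ t : Fin m → ZMod 2, dotp t x * dotp t y
      = ∑ t ∈ deltaC (Finset.univ : Finset (Fin m)), dotp t x * dotp t y := by
    rw [deltaC_univ]
  rw [this, sum_dotp_mul_zero (by simpa using hm) x y, add_zero]

lemma self_orth {m : ℕ} (M N : Finset (Fin m)) (hMm : M.card < m)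
    (h3 : 3 ≤ M.card + N.card)
    (v w : (Fin m → ZMod 2) × (Fin m → ZMod 2)) :
    ∑ i, gcwR ((deltaC M)ᶜ ×ˢ deltaC N) v i * gcwR ((deltaC M)ᶜ ×ˢ deltaC N) w i = 0 := by
  classical
  set A := (deltaC M)ᶜ with hA
  set B := deltaC N with hB
  set α := v.1
  set α' := w.1
  rw [Fintype.sum_prod_type]
  have hstep : ∀ d : {d // d ∈ A ×ˢ B},
      ∑ j : Fin 2, gcwR (A ×ˢ B) v (d, j) * gcwR (A ×ˢ B) w (d, j)
      = dotp d.1.1 α * dotp d.1.1 α'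
        + (dotp d.1.1 α * dotp d.1.2 α' + dotp d.1.2 α * dotp d.1.1 α') := by
    intro d
    rw [Fin.sum_univ_two]
    exact gray_mul (cwR (A ×ˢ B) v d) (cwR (A ×ˢ B) w d)
  simp_rw [hstep]
  rw [Finset.sum_coe_sort (A ×ˢ B) (fun d => dotp d.1 α * dotp d.1 α'
      + (dotp d.1 α * dotp d.2 α' + dotp d.2 α * dotp d.1 α'))]
  rw [Finset.sum_product]
  simp_rw [Finset.sum_add_distrib, Finset.sum_const, ← Finset.mul_sum, ← Finset.sum_mul]
  have hT23 : ∀ x y : Fin m → ZMod 2,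
      (∑ t₁ ∈ A, dotp t₁ x) * (∑ t₂ ∈ B, dotp t₂ y) = 0 := by
    intro x y
    by_cases hn : 2 ≤ N.card
    · rw [hB, sum_dotp_zero hn y, mul_zero]
    · have hM2 : 2 ≤ M.card := by omega
      rw [hA, sum_dotp_compl_zero hM2 (by omega) x, zero_mul]
  have hT1 : ∑ t₁ ∈ A, B.card • (dotp t₁ α * dotp t₁ α') = 0 := by
    rcases Nat.eq_zero_or_pos N.card with hn | hn
    · have hM3 : 3 ≤ M.card := by omega
      have : ∀ t₁, B.card • (dotp t₁ α * dotp t₁ α') = dotp t₁ α * dotp t₁ α' := by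
        intro t₁
        rw [hB, card_deltaC, hn, pow_zero, one_smul]
      simp_rw [this]
      exact sum_dotp_mul_compl_zero hM3 (by omega) α α'
    · have : ∀ t₁ : Fin m → ZMod 2, B.card • (dotp t₁ α * dotp t₁ α') = 0 := by
        intro t₁
        rw [nsmul_eq_mul, hB, card_deltaC, natCast_two_pow_zmod2 hn, zero_mul]
      simp_rw [this]
      exact Finset.sum_const_zero
  rw [hT1, zero_add, hT23 α α', zero_add, ← Finset.mul_sum, mul_comm]
  exact hT23 α' α

lemma z2eq : ∀ a b : ZMod 2, a + b = 0 → a = b := by decide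

lemma gcwR_add {m : ℕ} (Ds : Finset ((Fin m → ZMod 2) × (Fin m → ZMod 2)))
    (v w : (Fin m → ZMod 2) × (Fin m → ZMod 2)) :
    gcwR Ds (v + w) = gcwR Ds v + gcwR Ds w := by
  funext x
  simp only [gcwR, cwR, Pi.add_apply, Prod.fst_add]
  rw [dotp_add_right, dotp_add_right]
  have := gray_add (dotp x.1.1.1 v.1, dotp x.1.1.2 v.1)
    (dotp x.1.1.1 w.1, dotp x.1.1.2 w.1) x.2
  simpa [Prod.mk_add_mk] using this

lemma gcwR_only_fst {m : ℕ} (Ds : Finset ((Fin m → ZMod 2) × (Fin m → ZMod 2)))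
    (v : (Fin m → ZMod 2) × (Fin m → ZMod 2)) :
    gcwR Ds v = gcwR Ds (v.1, 0) := rfl

lemma weight_tri {m : ℕ} (hm : 1 ≤ m) (M N : Finset (Fin m))
    (v : (Fin m → ZMod 2) × (Fin m → ZMod 2)) (hv : v.1 ≠ 0) :
    hammingNorm (gcwR ((deltaC M)ᶜ ×ˢ deltaC N) v) = (2 ^ m - 2 ^ M.card) * 2 ^ N.card ∨
    hammingNorm (gcwR ((deltaC M)ᶜ ×ˢ deltaC N) v) = 2 ^ (m + N.card - 1) ∨
    hammingNorm (gcwR ((deltaC M)ᶜ ×ˢ deltaC N) v)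
      = 2 ^ (m + N.card - 1) - 2 ^ (M.card + N.card - 1) := by
  by_cases h1 : ∃ i ∈ N, v.1 i ≠ 0
  · obtain ⟨i, hi, hαi⟩ := h1
    exact Or.inl (weight_W1 M N v i hi hαi)
  · push_neg at h1
    by_cases h2 : ∃ i ∈ M, v.1 i ≠ 0
    · obtain ⟨i, hi, hαi⟩ := h2
      exact Or.inr (Or.inr (weight_W2 hm M N v hv h1 i hi hαi))
    · push_neg at h2
      exact Or.inr (Or.inl (weight_W3 hm M N v hv h1 h2))

lemma min_le_vals {m : ℕ} (M N : Finset (Fin m)) (hMm : M.card < m) (hM1 : 1 ≤ M.card) :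
    2 ^ (m + N.card - 1) - 2 ^ (M.card + N.card - 1) ≤ (2 ^ m - 2 ^ M.card) * 2 ^ N.card
    ∧ 2 ^ (m + N.card - 1) - 2 ^ (M.card + N.card - 1) ≤ 2 ^ (m + N.card - 1)
    ∧ 0 < 2 ^ (m + N.card - 1) - 2 ^ (M.card + N.card - 1) := by
  set a := M.card
  set n := N.card
  have hX : (2 ^ m - 2 ^ a) * 2 ^ n = 2 ^ (m + n) - 2 ^ (a + n) := by
    rw [Nat.sub_mul, ← pow_add, ← pow_add]
  have e1 : 2 ^ (m + n) = 2 * 2 ^ (m + n - 1) := by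
    rw [← pow_succ']; congr 1; omega
  have e2 : 2 ^ (a + n) = 2 * 2 ^ (a + n - 1) := by
    rw [← pow_succ']; congr 1; omega
  have hle : 2 ^ (a + n - 1) < 2 ^ (m + n - 1) :=
    Nat.pow_lt_pow_right (by omega) (by omega)
  refine ⟨?_, Nat.sub_le _ _, by omega⟩
  rw [hX]
  omega

lemma gcwR_ne_zero {m : ℕ} (hm : 1 ≤ m) (M N : Finset (Fin m)) (hMm : M.card < m)
    (hM1 : 1 ≤ M.card)
    (v : (Fin m → ZMod 2) × (Fin m → ZMod 2)) (hv : v.1 ≠ 0) :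
    gcwR ((deltaC M)ᶜ ×ˢ deltaC N) v ≠ 0 := by
  rw [← hammingNorm_pos_iff]
  obtain ⟨hZX, hZY, hZpos⟩ := min_le_vals M N hMm hM1
  rcases weight_tri hm M N v hv with h | h | h <;> rw [h]
  · omega
  · omega
  · omega

lemma gcwR_fst_zero {m : ℕ} (Ds : Finset ((Fin m → ZMod 2) × (Fin m → ZMod 2)))
    (β : Fin m → ZMod 2) : gcwR Ds ((0 : Fin m → ZMod 2), β) = 0 := by
  funext x
  have h0 : ∀ j : Fin 2, grayPair (0 : ZMod 2 × ZMod 2) j = 0 := by decide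
  have h0' : ∀ j : Fin 2, grayPair ((0 : ZMod 2), (0 : ZMod 2)) j = 0 := by decide
  simp [gcwR, cwR, dotp_zero_right, h0, h0']

theorem stmt_16 {m : ℕ} (hm : 1 ≤ m) (M N : Finset (Fin m))
    (hMu : M ≠ Finset.univ) (hMN : ¬ M ⊆ N)
    (Ds : Finset ((Fin m → ZMod 2) × (Fin m → ZMod 2)))
    (hDs : Ds = (deltaC M)ᶜ ×ˢ deltaC N) :
    (2 * Ds.card = (2 ^ m - 2 ^ M.card) * 2 ^ (N.card + 1)) ∧
    ((Finset.univ : Finset ((Fin m → ZMod 2) × (Fin m → ZMod 2))).image (gcwR Ds)).card = 2 ^ m ∧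
    (∀ v w : (Fin m → ZMod 2) × (Fin m → ZMod 2), ∃ z : (Fin m → ZMod 2) × (Fin m → ZMod 2), gcwR Ds z = gcwR Ds v + gcwR Ds w) ∧
    (∀ v : (Fin m → ZMod 2) × (Fin m → ZMod 2), gcwR Ds v ≠ 0 → 2 ^ (m + N.card - 1) - 2 ^ (M.card + N.card - 1) ≤ hammingNorm (gcwR Ds v)) ∧
    (∃ v : (Fin m → ZMod 2) × (Fin m → ZMod 2), gcwR Ds v ≠ 0 ∧ hammingNorm (gcwR Ds v) = 2 ^ (m + N.card - 1) - 2 ^ (M.card + N.card - 1)) ∧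
    (∀ v : (Fin m → ZMod 2) × (Fin m → ZMod 2), gcwR Ds v ≠ 0 →
        hammingNorm (gcwR Ds v) = (2 ^ m - 2 ^ M.card) * 2 ^ N.card ∨
        hammingNorm (gcwR Ds v) = 2 ^ (m + N.card - 1) ∨
        hammingNorm (gcwR Ds v) = 2 ^ (m + N.card - 1) - 2 ^ (M.card + N.card - 1)) ∧
    (3 ≤ M.card + N.card →
      ∀ v w : (Fin m → ZMod 2) × (Fin m → ZMod 2), ∑ i, gcwR Ds v i * gcwR Ds w i = 0) := by
  subst hDs
  obtain ⟨i₀, hi₀M, hi₀N⟩ := Finset.not_subset.mp hMN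
  have hM1 : 1 ≤ M.card := Finset.card_pos.mpr ⟨i₀, hi₀M⟩
  have hMm : M.card < m := by
    have := Finset.card_lt_card (Finset.ssubset_univ_iff.mpr hMu)
    simpa using this
  have hv1ne : ∀ v : (Fin m → ZMod 2) × (Fin m → ZMod 2),
      gcwR ((deltaC M)ᶜ ×ˢ deltaC N) v ≠ 0 → v.1 ≠ 0 := by
    intro v hvne h
    exact hvne (by rw [gcwR_only_fst, h, gcwR_fst_zero])
  obtain ⟨hZX, hZY, hZpos⟩ := min_le_vals M N hMm hM1
  refine ⟨?_, ?_, ?_, ?_, ?_, ?_, ?_⟩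
  · rw [Finset.card_product, card_compl_deltaC, card_deltaC, pow_succ]
    ring
  · have himg : (Finset.univ.image (gcwR ((deltaC M)ᶜ ×ˢ deltaC N)))
        = Finset.univ.image
          (fun α : Fin m → ZMod 2 => gcwR ((deltaC M)ᶜ ×ˢ deltaC N) (α, 0)) := by
      ext y
      simp only [Finset.mem_image, Finset.mem_univ, true_and]
      constructor
      · rintro ⟨v, rfl⟩; exact ⟨v.1, (gcwR_only_fst _ v).symm⟩
      · rintro ⟨α, rfl⟩; exact ⟨(α, 0), rfl⟩
    have hinj : Function.Injective
        (fun α : Fin m → ZMod 2 => gcwR ((deltaC M)ᶜ ×ˢ deltaC N) (α, 0)) := by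
      intro α α' h
      by_contra hne
      have hδ : α + α' ≠ 0 := fun h0 => hne (funext fun i => z2eq _ _ (congrFun h0 i))
      have hpair : ((α, (0 : Fin m → ZMod 2)) + (α', 0)) = ((α + α', 0) :
          (Fin m → ZMod 2) × (Fin m → ZMod 2)) := by
        simp [Prod.mk_add_mk]
      have h' : gcwR ((deltaC M)ᶜ ×ˢ deltaC N) (α, 0)
          = gcwR ((deltaC M)ᶜ ×ˢ deltaC N) (α', 0) := h
      have h0 : gcwR ((deltaC M)ᶜ ×ˢ deltaC N) (α + α', 0) = 0 := by
        rw [← hpair, gcwR_add, h']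
        funext i; exact z2add _
      exact gcwR_ne_zero hm M N hMm hM1 (α + α', 0) hδ h0
    rw [himg, Finset.card_image_of_injective _ hinj, Finset.card_univ]
    simp
  · intro v w
    exact ⟨v + w, gcwR_add _ v w⟩
  · intro v hvne
    rcases weight_tri hm M N v (hv1ne v hvne) with h | h | h <;> rw [h] <;> omega
  · have hsne : (Pi.single i₀ (1 : ZMod 2) : Fin m → ZMod 2) ≠ 0 := by
      intro h
      have := congrFun h i₀
      rw [Pi.single_eq_same] at this
      exact one_ne_zero this
    have hsne' : ((Pi.single i₀ (1 : ZMod 2) : Fin m → ZMod 2),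
        (0 : Fin m → ZMod 2)).1 ≠ 0 := hsne
    have hN' : ∀ i ∈ N, ((Pi.single i₀ (1 : ZMod 2) : Fin m → ZMod 2),
        (0 : Fin m → ZMod 2)).1 i = 0 := by
      intro i hiN
      have hne : i ≠ i₀ := fun h => hi₀N (h ▸ hiN)
      simp only []
      rw [Pi.single_eq_of_ne hne]
    have hαi : ((Pi.single i₀ (1 : ZMod 2) : Fin m → ZMod 2),
        (0 : Fin m → ZMod 2)).1 i₀ ≠ 0 := by
      simp only []
      rw [Pi.single_eq_same]
      exact one_ne_zero
    exact ⟨(Pi.single i₀ 1, 0),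
      gcwR_ne_zero hm M N hMm hM1 _ hsne',
      weight_W2 hm M N _ hsne' hN' i₀ hi₀M hαi⟩
  · intro v hvne
    exact weight_tri hm M N v (hv1ne v hvne)
  · intro h3 v w
    exact self_orth M N hMm h3 v w
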